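/- Let (X̂, Ŷ, Ẑ, Û, V̂, Λ̂, Π̂) satisfy: (X̂Ŷ − Ẑ)Ŷ^T + Λ̂ = 0, X̂^T(X̂Ŷ − Ẑ) + Π̂ = 0, P_{Ω^c}(X̂Ŷ − Ẑ) = 0, P_Ω(Ẑ − M) = 0, X̂ = Û ≥ 0, Ŷ = V̂ ≥ 0, P₊(X̂ + Λ̂/α) = Û, and P₊(Ŷ + Π̂/β) = V̂. Then (X̂, Ŷ, Ẑ, Û, V̂) together with (Λ̂, Π̂) satisfies the full KKT conditions for the NMFC problem min{(1/2)‖XY−Z‖_F² : X=U, Y=V, U≥0, V≥0, P_Ω(Z−M)=0}; in particular Λ̂ ≤ 0, Π̂ ≤ 0, Λ̂ ⊙ Û = 0, and Π̂ ⊙ V̂ = 0. -/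

import Mathlib

open Matrix

/-- Projection onto entries in Ω. -/
def projOmega {m n : ℕ} (Ω : Finset (Fin m × Fin n)) (A : Matrix (Fin m) (Fin n) ℝ) :
    Matrix (Fin m) (Fin n) ℝ :=
  fun i j => if (i, j) ∈ Ω then A i j else 0

/-- Projection onto entries in the complement of Ω. -/
def projOmegaC {m n : ℕ} (Ω : Finset (Fin m × Fin n)) (A : Matrix (Fin m) (Fin n) ℝ) :
    Matrix (Fin m) (Fin n) ℝ :=
  fun i j => if (i, j) ∈ Ω then 0 else A i j


lemma aux_kkt {u l a : ℝ} (ha : 0 < a) (hu : 0 ≤ u)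
    (h : max (u + l / a) 0 = u) : l ≤ 0 ∧ l * u = 0 := by
  constructor
  · have h1 := le_max_left (u + l / a) 0
    rw [h] at h1
    have : l / a ≤ 0 := by linarith
    nlinarith [mul_pos ha ha, div_mul_cancel₀ l (ne_of_gt ha)]
  · rcases eq_or_lt_of_le hu with hu0 | hu0
    · rw [← hu0, mul_zero]
    · have : max (u + l / a) 0 = u + l / a := by
        rcases max_cases (u + l / a) 0 with ⟨h1, _⟩ | ⟨h1, h2⟩
        · exact h1
        · rw [h] at h1; linarith
      rw [this] at h
      have : l / a = 0 := by linarith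
      have : l = 0 := by field_simp at this; simpa using this
      rw [this, zero_mul]

theorem limit_point_satisfies_KKT {m q n : ℕ} (Ω : Finset (Fin m × Fin n))
    (α β : ℝ) (hα : 0 < α) (hβ : 0 < β)
    (X U Λ : Matrix (Fin m) (Fin q) ℝ)
    (Y V Pm : Matrix (Fin q) (Fin n) ℝ)
    (Z M : Matrix (Fin m) (Fin n) ℝ)
    (h1 : (X * Y - Z) * Yᵀ + Λ = 0)
    (h2 : Xᵀ * (X * Y - Z) + Pm = 0)
    (h3 : projOmegaC Ω (X * Y - Z) = 0)
    (h4 : projOmega Ω (Z - M) = 0)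
    (h5 : X = U) (h5' : ∀ i j, 0 ≤ U i j)
    (h6 : Y = V) (h6' : ∀ i j, 0 ≤ V i j)
    (h7 : ∀ i j, max (X i j + Λ i j / α) 0 = U i j)
    (h8 : ∀ i j, max (Y i j + Pm i j / β) 0 = V i j) :
    (X * Y - Z) * Yᵀ + Λ = 0 ∧
    Xᵀ * (X * Y - Z) + Pm = 0 ∧
    projOmegaC Ω (X * Y - Z) = 0 ∧
    projOmega Ω (Z - M) = 0 ∧
    X - U = 0 ∧ Y - V = 0 ∧
    (∀ i j, Λ i j ≤ 0) ∧ (∀ i j, 0 ≤ U i j) ∧ (∀ i j, Λ i j * U i j = 0) ∧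
    (∀ i j, Pm i j ≤ 0) ∧ (∀ i j, 0 ≤ V i j) ∧ (∀ i j, Pm i j * V i j = 0) := by
  subst h5 h6
  refine ⟨h1, h2, h3, h4, sub_self _, sub_self _, ?_, h5', ?_, ?_, h6', ?_⟩
  · exact fun i j => (aux_kkt hα (h5' i j) (h7 i j)).1
  · exact fun i j => (aux_kkt hα (h5' i j) (h7 i j)).2
  · exact fun i j => (aux_kkt hβ (h6' i j) (h8 i j)).1
  · exact fun i j => (aux_kkt hβ (h6' i j) (h8 i j)).2
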